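/- Let (H, η) be an extended strip decomposition of a graph G and let (A, B) be a separation in H. Define X = ⋃_{x ∈ A ∩ B} ⋃_{y ∈ N_H(x)} η(xy, x). Then every connected component of G - X is contained in one of: the preimage of A \ B, the preimage of B \ A, η(x) for some x ∈ A ∩ B, η(xy) for some edge xy with both endpoints in A, or η(xyz) for some triangle xyz with at least two of its vertices in A ∩ B. -/

import Mathlib

/-- A triangle in a graph `H`. -/
def IsTriangle {W : Type*} (H : SimpleGraph W) (x y z : W) : Prop :=
  H.Adj x y ∧ H.Adj y z ∧ H.Adj x z

/-- An extended strip decomposition of the part `U ⊆ V(G)` of a graph `G`, with host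
graph `H`.  `vmap x = η(x)`, `emap x y = η(xy)`, `imap x y = η(xy, x)` and
`tmap x y z = η(xyz)`.  The sets partition `U`, interfaces around a common vertex are
complete to each other, and every edge of `G` inside `U` is of one of the allowed types. -/
structure ExtStripDecomp {V W : Type*} (G : SimpleGraph V) (H : SimpleGraph W)
    (U : Set V) where
  vmap : W → Set V
  emap : W → W → Set V
  imap : W → W → Set V
  tmap : W → W → W → Set V
  emap_symm : ∀ x y, emap x y = emap y x
  tmap_symm₁ : ∀ x y z, tmap x y z = tmap y x z
  tmap_symm₂ : ∀ x y z, tmap x y z = tmap x z y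
  vmap_sub : ∀ x, vmap x ⊆ U
  emap_sub : ∀ x y, emap x y ⊆ U
  tmap_sub : ∀ x y z, tmap x y z ⊆ U
  imap_sub : ∀ x y, imap x y ⊆ emap x y
  emap_empty_of_not_adj : ∀ x y, ¬ H.Adj x y → emap x y = ∅
  tmap_empty_of_not_tri : ∀ x y z, ¬ IsTriangle H x y z → tmap x y z = ∅
  cover : ∀ u ∈ U, (∃ x, u ∈ vmap x) ∨ (∃ x y, u ∈ emap x y) ∨ ∃ x y z, u ∈ tmap x y z
  vmap_disj : ∀ x x', x ≠ x' → Disjoint (vmap x) (vmap x')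
  ve_disj : ∀ x y z, Disjoint (vmap x) (emap y z)
  vt_disj : ∀ x a b c, Disjoint (vmap x) (tmap a b c)
  et_disj : ∀ x y a b c, Disjoint (emap x y) (tmap a b c)
  ee_disj : ∀ x y a b, s(x, y) ≠ s(a, b) → Disjoint (emap x y) (emap a b)
  tt_disj : ∀ x y z a b c, ({x, y, z} : Set W) ≠ {a, b, c} →
    Disjoint (tmap x y z) (tmap a b c)
  interfaces_complete : ∀ x y z, H.Adj x y → H.Adj x z → y ≠ z →
    ∀ u ∈ imap x y, ∀ v ∈ imap x z, G.Adj u v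
  edge_rule : ∀ u v, u ∈ U → v ∈ U → G.Adj u v →
    (∃ x, u ∈ vmap x ∧ v ∈ vmap x) ∨
    (∃ x y, u ∈ emap x y ∧ v ∈ emap x y) ∨
    (∃ x y z, u ∈ tmap x y z ∧ v ∈ tmap x y z) ∨
    (∃ x y z, H.Adj x y ∧ H.Adj x z ∧ u ∈ imap x y ∧ v ∈ imap x z) ∨
    (∃ x y, H.Adj x y ∧
      ((u ∈ imap x y ∧ v ∈ vmap x) ∨ (v ∈ imap x y ∧ u ∈ vmap x))) ∨
    (∃ x y z, (u ∈ tmap x y z ∧ v ∈ imap x y ∧ v ∈ imap y x) ∨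
      (v ∈ tmap x y z ∧ u ∈ imap x y ∧ u ∈ imap y x))

/-- A rigid extended strip decomposition: for every edge `xy` of `H` the sets `η(xy)`,
`η(xy, x)` and `η(xy, y)` are nonempty. -/
def ExtStripDecomp.Rigid {V W : Type*} {G : SimpleGraph V} {H : SimpleGraph W} {U : Set V}
    (D : ExtStripDecomp G H U) : Prop :=
  ∀ x y, H.Adj x y →
    (D.emap x y).Nonempty ∧ (D.imap x y).Nonempty ∧ (D.imap y x).Nonempty

/-- The graph obtained from `G` by deleting the vertices of `S`
(deleted vertices become isolated). -/
def removeVerts {V : Type*} (G : SimpleGraph V) (S : Set V) : SimpleGraph V where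
  Adj u w := G.Adj u w ∧ u ∉ S ∧ w ∉ S
  symm := ⟨fun u w h => ⟨h.1.symm, h.2.2, h.2.1⟩⟩
  loopless := ⟨fun u h => G.loopless.irrefl u h.1⟩

/-- The preimage in `G` of a set `S` of vertices of the host graph `H`: all vertex sets
`η(x)` for `x ∈ S`, all edge sets `η(xy)` with at least one endpoint in `S`, and all
triangle sets `η(xyz)` with at least two of `x, y, z` in `S`. -/
def ExtStripDecomp.preimg {V W : Type*} {G : SimpleGraph V} {H : SimpleGraph W}
    {U : Set V} (D : ExtStripDecomp G H U) (S : Set W) : Set V :=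
  {v | (∃ x ∈ S, v ∈ D.vmap x) ∨
    (∃ x y, H.Adj x y ∧ (x ∈ S ∨ y ∈ S) ∧ v ∈ D.emap x y) ∨
    ∃ x y z, IsTriangle H x y z ∧
      ((x ∈ S ∧ y ∈ S) ∨ (x ∈ S ∧ z ∈ S) ∨ (y ∈ S ∧ z ∈ S)) ∧ v ∈ D.tmap x y z}


section AuxLemmas

variable {V W : Type*} {G : SimpleGraph V} {H : SimpleGraph W} {U : Set V}

lemma reach_closed {G' : SimpleGraph V} {S : Set V}
    (hcl : ∀ u w, G'.Adj u w → u ∈ S → w ∈ S) :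
    ∀ a b, G'.Reachable a b → a ∈ S → b ∈ S := by
  intro a b h
  obtain ⟨p⟩ := h
  induction p with
  | nil => exact id
  | cons h p ih => exact fun ha => ih (hcl _ _ h ha)

lemma adj_of_mem_emap (D : ExtStripDecomp G H U) {u : V} {x y : W}
    (h : u ∈ D.emap x y) : H.Adj x y := by
  by_contra hn
  rw [D.emap_empty_of_not_adj x y hn] at h
  exact h

lemma tri_of_mem_tmap (D : ExtStripDecomp G H U) {u : V} {x y z : W}
    (h : u ∈ D.tmap x y z) : IsTriangle H x y z := by
  by_contra hn
  rw [D.tmap_empty_of_not_tri x y z hn] at h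
  exact h

lemma sym_of_mem_ee (D : ExtStripDecomp G H U) {u : V} {x y a b : W}
    (h1 : u ∈ D.emap x y) (h2 : u ∈ D.emap a b) : s(x, y) = s(a, b) := by
  by_contra h
  exact Set.disjoint_left.1 (D.ee_disj x y a b h) h1 h2

lemma emap_eq_of_sym (D : ExtStripDecomp G H U) {x y a b : W}
    (h : s(x, y) = s(a, b)) : D.emap x y = D.emap a b := by
  rcases Sym2.eq_iff.1 h with ⟨rfl, rfl⟩ | ⟨rfl, rfl⟩
  · rfl
  · exact D.emap_symm _ _

lemma seteq_of_mem_tt (D : ExtStripDecomp G H U) {u : V} {x y z a b c : W}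
    (h1 : u ∈ D.tmap x y z) (h2 : u ∈ D.tmap a b c) :
    ({x, y, z} : Set W) = {a, b, c} := by
  by_contra h
  exact Set.disjoint_left.1 (D.tt_disj x y z a b c h) h1 h2

lemma tmap_perm (D : ExtStripDecomp G H U) {x y z a b c : W}
    (hxy : x ≠ y) (hyz : y ≠ z) (hxz : x ≠ z)
    (hs : ({x, y, z} : Set W) = {a, b, c}) : D.tmap a b c = D.tmap x y z := by
  have pyxz : D.tmap y x z = D.tmap x y z := (D.tmap_symm₁ x y z).symm
  have pxzy : D.tmap x z y = D.tmap x y z := (D.tmap_symm₂ x y z).symm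
  have pzyx : D.tmap z y x = D.tmap x y z := by
    rw [D.tmap_symm₁, D.tmap_symm₂, D.tmap_symm₁]
  have pyzx : D.tmap y z x = D.tmap x y z := by
    rw [D.tmap_symm₂, D.tmap_symm₁]
  have pzxy : D.tmap z x y = D.tmap x y z := by
    rw [D.tmap_symm₁, D.tmap_symm₂]
  have ha : a = x ∨ a = y ∨ a = z := by
    have : a ∈ ({x, y, z} : Set W) := hs ▸ (by simp)
    simpa using this
  have hb : b = x ∨ b = y ∨ b = z := by
    have : b ∈ ({x, y, z} : Set W) := hs ▸ (by simp)
    simpa using this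
  have hc : c = x ∨ c = y ∨ c = z := by
    have : c ∈ ({x, y, z} : Set W) := hs ▸ (by simp)
    simpa using this
  have hx : x = a ∨ x = b ∨ x = c := by
    have : x ∈ ({a, b, c} : Set W) := hs ▸ (by simp)
    simpa using this
  have hy : y = a ∨ y = b ∨ y = c := by
    have : y ∈ ({a, b, c} : Set W) := hs ▸ (by simp)
    simpa using this
  have hz : z = a ∨ z = b ∨ z = c := by
    have : z ∈ ({a, b, c} : Set W) := hs ▸ (by simp)
    simpa using this
  rcases ha with rfl | rfl | rfl <;> rcases hb with rfl | rfl | rfl <;>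
    rcases hc with rfl | rfl | rfl <;>
    solve
      | rfl
      | exact pyxz
      | exact pxzy
      | exact pzyx
      | exact pyzx
      | exact pzxy
      | simp_all
      | (exfalso; rcases hz with rfl | rfl <;> simp_all)
      | (exfalso; rcases hz with rfl | rfl | rfl <;> simp_all)

lemma side_lemma {A B : Set W} (hcov : A ∪ B = Set.univ)
    (hsep : ∀ a ∈ A \ B, ∀ b ∈ B \ A, ¬ H.Adj a b) :
    ∀ p q : W, p ∉ A ∩ B → H.Adj p q → q ∈ A \ B → p ∈ A \ B := by
  intro p q hp hpq hq
  have hpu : p ∈ A ∪ B := hcov ▸ Set.mem_univ p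
  by_cases hpA : p ∈ A
  · exact ⟨hpA, fun hB => hp ⟨hpA, hB⟩⟩
  · rcases hpu with h | h
    · exact absurd h hpA
    · exact absurd hpq.symm (hsep q hq p ⟨h, hpA⟩)

end AuxLemmas

section Closure

variable {V W : Type*} {G : SimpleGraph V} {H : SimpleGraph W}

lemma preimg_diff_closed (D : ExtStripDecomp G H Set.univ) (A B : Set W)
    (hcov : A ∪ B = Set.univ)
    (hsep : ∀ a ∈ A \ B, ∀ b ∈ B \ A, ¬ H.Adj a b)
    (X : Set V) (hX : X = {u : V | ∃ x ∈ A ∩ B, ∃ y, H.Adj x y ∧ u ∈ D.imap x y}) :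
    ∀ u w, (removeVerts G X).Adj u w → u ∈ D.preimg (A \ B) → w ∈ D.preimg (A \ B) := by
  subst hX
  intro u w hadj' hu
  obtain ⟨hadj, huX, hwX⟩ : G.Adj u w ∧ u ∉ _ ∧ w ∉ _ := hadj'
  have side := side_lemma hcov hsep
  have notX : ∀ (t : V) (p q : W), t ∉ {u : V | ∃ x ∈ A ∩ B, ∃ y, H.Adj x y ∧ u ∈ D.imap x y} →
      H.Adj p q → t ∈ D.imap p q → p ∉ A ∩ B := by
    intro t p q ht hpq hm hpAB
    exact ht ⟨p, hpAB, q, hpq, hm⟩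
  simp only [ExtStripDecomp.preimg, Set.mem_setOf_eq] at hu ⊢
  -- extraction lemmas
  have exV : ∀ p, u ∈ D.vmap p → p ∈ A \ B := by
    intro p hp
    rcases hu with ⟨x, hxS, hux⟩ | ⟨x, y, hxy, hcond, hux⟩ | ⟨x, y, z, htri, hcond, hux⟩
    · have : x = p := by
        by_contra h
        exact Set.disjoint_left.1 (D.vmap_disj x p h) hux hp
      exact this ▸ hxS
    · exact absurd hux (Set.disjoint_left.1 (D.ve_disj p x y) hp)
    · exact absurd hux (Set.disjoint_left.1 (D.vt_disj p x y z) hp)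
  have exE : ∀ p q, u ∈ D.emap p q → p ∈ A \ B ∨ q ∈ A \ B := by
    intro p q hp
    rcases hu with ⟨x, hxS, hux⟩ | ⟨x, y, hxy, hcond, hux⟩ | ⟨x, y, z, htri, hcond, hux⟩
    · exact absurd hp (Set.disjoint_left.1 (D.ve_disj x p q) hux)
    · have hs := sym_of_mem_ee D hux hp
      rcases Sym2.eq_iff.1 hs with ⟨rfl, rfl⟩ | ⟨rfl, rfl⟩
      · exact hcond
      · exact hcond.symm
    · exact absurd hp (Set.disjoint_left.1 (D.et_disj p q x y z).symm hux)
  have exT : ∀ p q r, u ∈ D.tmap p q r →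
      (p ∈ A \ B ∧ q ∈ A \ B) ∨ (p ∈ A \ B ∧ r ∈ A \ B) ∨ (q ∈ A \ B ∧ r ∈ A \ B) := by
    intro p q r hp
    rcases hu with ⟨x, hxS, hux⟩ | ⟨x, y, hxy, hcond, hux⟩ | ⟨x, y, z, htri, hcond, hux⟩
    · exact absurd hp (Set.disjoint_left.1 (D.vt_disj x p q r) hux)
    · exact absurd hp (Set.disjoint_left.1 (D.et_disj x y p q r) hux)
    · have hs := seteq_of_mem_tt D hux hp
      have hxy := htri.1.ne
      have hyz := htri.2.1.ne
      have hxz := htri.2.2.ne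
      have hxm : x = p ∨ x = q ∨ x = r := by
        have : x ∈ ({p, q, r} : Set W) := hs ▸ (by simp)
        simpa using this
      have hym : y = p ∨ y = q ∨ y = r := by
        have : y ∈ ({p, q, r} : Set W) := hs ▸ (by simp)
        simpa using this
      have hzm : z = p ∨ z = q ∨ z = r := by
        have : z ∈ ({p, q, r} : Set W) := hs ▸ (by simp)
        simpa using this
      rcases hcond with ⟨h1, h2⟩ | ⟨h1, h2⟩ | ⟨h1, h2⟩
      · rcases hxm with rfl | rfl | rfl <;> rcases hym with rfl | rfl | rfl <;> tauto
      · rcases hxm with rfl | rfl | rfl <;> rcases hzm with rfl | rfl | rfl <;> tauto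
      · rcases hym with rfl | rfl | rfl <;> rcases hzm with rfl | rfl | rfl <;> tauto
  rcases D.edge_rule u w (Set.mem_univ u) (Set.mem_univ w) hadj with
    ⟨t, hut, hwt⟩ | ⟨a, b, hua, hwa⟩ | ⟨a, b, c, hua, hwa⟩ |
    ⟨p, q, r, hpq, hpr, huq, hwr⟩ | ⟨p, q, hpq, hc⟩ | ⟨p, q, r, hc⟩
  · exact Or.inl ⟨t, exV t hut, hwt⟩
  · exact Or.inr (Or.inl ⟨a, b, adj_of_mem_emap D hua, exE a b hua, hwa⟩)
  · exact Or.inr (Or.inr ⟨a, b, c, tri_of_mem_tmap D hua, exT a b c hua, hwa⟩)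
  · -- imap-imap
    have hue := D.imap_sub p q huq
    have hpAB : p ∉ A ∩ B := notX u p q huX hpq huq
    have hpA : p ∈ A \ B := by
      rcases exE p q hue with h | h
      · exact h
      · exact side p q hpAB hpq h
    exact Or.inr (Or.inl ⟨p, r, hpr, Or.inl hpA, D.imap_sub p r hwr⟩)
  · rcases hc with ⟨huq, hwp⟩ | ⟨hwq, hup⟩
    · have hue := D.imap_sub p q huq
      have hpAB : p ∉ A ∩ B := notX u p q huX hpq huq
      have hpA : p ∈ A \ B := by
        rcases exE p q hue with h | h
        · exact h
        · exact side p q hpAB hpq h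
      exact Or.inl ⟨p, hpA, hwp⟩
    · have hpA : p ∈ A \ B := exV p hup
      exact Or.inr (Or.inl ⟨p, q, hpq, Or.inl hpA, D.imap_sub p q hwq⟩)
  · rcases hc with ⟨hut, hw1, hw2⟩ | ⟨hwt, hu1, hu2⟩
    · have hpq : H.Adj p q := adj_of_mem_emap D (D.imap_sub p q hw1)
      have hcond := exT p q r hut
      have hpqA : p ∈ A \ B ∨ q ∈ A \ B := by tauto
      exact Or.inr (Or.inl ⟨p, q, hpq, hpqA, D.imap_sub p q hw1⟩)
    · have hue := D.imap_sub p q hu1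
      have hpq : H.Adj p q := adj_of_mem_emap D hue
      have hpAB : p ∉ A ∩ B := notX u p q huX hpq hu1
      have hqAB : q ∉ A ∩ B := notX u q p huX hpq.symm hu2
      have hboth : p ∈ A \ B ∧ q ∈ A \ B := by
        rcases exE p q hue with h | h
        · exact ⟨h, side q p hqAB hpq.symm h⟩
        · exact ⟨side p q hpAB hpq h, h⟩
      exact Or.inr (Or.inr ⟨p, q, r, tri_of_mem_tmap D hwt, Or.inl hboth, hwt⟩)

lemma vmap_closed (D : ExtStripDecomp G H Set.univ) (A B : Set W)
    (X : Set V) (hX : X = {u : V | ∃ x ∈ A ∩ B, ∃ y, H.Adj x y ∧ u ∈ D.imap x y})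
    (x : W) (hx : x ∈ A ∩ B) :
    ∀ u w, (removeVerts G X).Adj u w → u ∈ D.vmap x → w ∈ D.vmap x := by
  subst hX
  intro u w hadj' hu
  obtain ⟨hadj, huX, hwX⟩ : G.Adj u w ∧ u ∉ _ ∧ w ∉ _ := hadj'
  rcases D.edge_rule u w (Set.mem_univ u) (Set.mem_univ w) hadj with
    ⟨t, hut, hwt⟩ | ⟨a, b, hua, hwa⟩ | ⟨a, b, c, hua, hwa⟩ |
    ⟨p, q, r, hpq, hpr, huq, hwr⟩ | ⟨p, q, hpq, hc⟩ | ⟨p, q, r, hc⟩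
  · have : x = t := by
      by_contra h
      exact Set.disjoint_left.1 (D.vmap_disj x t h) hu hut
    exact this ▸ hwt
  · exact absurd hua (Set.disjoint_left.1 (D.ve_disj x a b) hu)
  · exact absurd hua (Set.disjoint_left.1 (D.vt_disj x a b c) hu)
  · exact absurd (D.imap_sub p q huq) (Set.disjoint_left.1 (D.ve_disj x p q) hu)
  · rcases hc with ⟨huq, hwp⟩ | ⟨hwq, hup⟩
    · exact absurd (D.imap_sub p q huq) (Set.disjoint_left.1 (D.ve_disj x p q) hu)
    · have : x = p := by
        by_contra h
        exact Set.disjoint_left.1 (D.vmap_disj x p h) hu hup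
      subst this
      exact absurd ⟨x, hx, q, hpq, hwq⟩ hwX
  · rcases hc with ⟨hut, hw1, hw2⟩ | ⟨hwt, hu1, hu2⟩
    · exact absurd hut (Set.disjoint_left.1 (D.vt_disj x p q r) hu)
    · exact absurd (D.imap_sub p q hu1) (Set.disjoint_left.1 (D.ve_disj x p q) hu)

lemma emap_closed (D : ExtStripDecomp G H Set.univ) (A B : Set W)
    (X : Set V) (hX : X = {u : V | ∃ x ∈ A ∩ B, ∃ y, H.Adj x y ∧ u ∈ D.imap x y})
    (x y : W) (hx : x ∈ A ∩ B) (hy : y ∈ A ∩ B) :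
    ∀ u w, (removeVerts G X).Adj u w → u ∈ D.emap x y → w ∈ D.emap x y := by
  subst hX
  intro u w hadj' hu
  obtain ⟨hadj, huX, hwX⟩ : G.Adj u w ∧ u ∉ _ ∧ w ∉ _ := hadj'
  -- if u is in some interface imap p q with u ∈ emap p q matching emap x y, then u ∈ X
  have key : ∀ p q, H.Adj p q → u ∈ D.imap p q → False := by
    intro p q hpq hup
    have hs := sym_of_mem_ee D hu (D.imap_sub p q hup)
    have hpAB : p ∈ A ∩ B := by
      rcases Sym2.eq_iff.1 hs with ⟨h1, h2⟩ | ⟨h1, h2⟩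
      · exact h1 ▸ hx
      · exact h2 ▸ hy
    exact huX ⟨p, hpAB, q, hpq, hup⟩
  rcases D.edge_rule u w (Set.mem_univ u) (Set.mem_univ w) hadj with
    ⟨t, hut, hwt⟩ | ⟨a, b, hua, hwa⟩ | ⟨a, b, c, hua, hwa⟩ |
    ⟨p, q, r, hpq, hpr, huq, hwr⟩ | ⟨p, q, hpq, hc⟩ | ⟨p, q, r, hc⟩
  · exact absurd hu (Set.disjoint_left.1 (D.ve_disj t x y) hut)
  · have := emap_eq_of_sym D (sym_of_mem_ee D hu hua)
    exact this ▸ hwa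
  · exact absurd hua (Set.disjoint_left.1 (D.et_disj x y a b c) hu)
  · exact absurd (key p q hpq huq) id
  · rcases hc with ⟨huq, hwp⟩ | ⟨hwq, hup⟩
    · exact absurd (key p q hpq huq) id
    · exact absurd hu (Set.disjoint_left.1 (D.ve_disj p x y) hup)
  · rcases hc with ⟨hut, hw1, hw2⟩ | ⟨hwt, hu1, hu2⟩
    · exact absurd hut (Set.disjoint_left.1 (D.et_disj x y p q r) hu)
    · have hpq : H.Adj p q := adj_of_mem_emap D (D.imap_sub p q hu1)
      exact absurd (key p q hpq hu1) id

lemma tmap_closed (D : ExtStripDecomp G H Set.univ) (A B : Set W)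
    (X : Set V) (hX : X = {u : V | ∃ x ∈ A ∩ B, ∃ y, H.Adj x y ∧ u ∈ D.imap x y})
    (x y z : W) (htri : IsTriangle H x y z)
    (hcond : (x ∈ A ∩ B ∧ y ∈ A ∩ B) ∨ (x ∈ A ∩ B ∧ z ∈ A ∩ B) ∨ (y ∈ A ∩ B ∧ z ∈ A ∩ B)) :
    ∀ u w, (removeVerts G X).Adj u w → u ∈ D.tmap x y z → w ∈ D.tmap x y z := by
  subst hX
  intro u w hadj' hu
  obtain ⟨hadj, huX, hwX⟩ : G.Adj u w ∧ u ∉ _ ∧ w ∉ _ := hadj'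
  have hxy := htri.1.ne
  have hyz := htri.2.1.ne
  have hxz := htri.2.2.ne
  rcases D.edge_rule u w (Set.mem_univ u) (Set.mem_univ w) hadj with
    ⟨t, hut, hwt⟩ | ⟨a, b, hua, hwa⟩ | ⟨a, b, c, hua, hwa⟩ |
    ⟨p, q, r, hpq, hpr, huq, hwr⟩ | ⟨p, q, hpq, hc⟩ | ⟨p, q, r, hc⟩
  · exact absurd hu (Set.disjoint_left.1 (D.vt_disj t x y z) hut)
  · exact absurd hu (Set.disjoint_left.1 (D.et_disj a b x y z) hua)
  · have hs := seteq_of_mem_tt D hu hua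
    exact (tmap_perm D hxy hyz hxz hs) ▸ hwa
  · exact absurd hu (Set.disjoint_left.1 (D.et_disj p q x y z) (D.imap_sub p q huq))
  · rcases hc with ⟨huq, hwp⟩ | ⟨hwq, hup⟩
    · exact absurd hu (Set.disjoint_left.1 (D.et_disj p q x y z) (D.imap_sub p q huq))
    · exact absurd hu (Set.disjoint_left.1 (D.vt_disj p x y z) hup)
  · rcases hc with ⟨hut, hw1, hw2⟩ | ⟨hwt, hu1, hu2⟩
    · -- u ∈ tmap p q r, w ∈ imap p q ∩ imap q p : w would be in X
      exfalso
      have hs := seteq_of_mem_tt D hu hut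
      have hpq : H.Adj p q := adj_of_mem_emap D (D.imap_sub p q hw1)
      have hpm : p = x ∨ p = y ∨ p = z := by
        have : p ∈ ({x, y, z} : Set W) := hs ▸ (by simp)
        simpa using this
      have hqm : q = x ∨ q = y ∨ q = z := by
        have : q ∈ ({x, y, z} : Set W) := hs ▸ (by simp)
        simpa using this
      have hnpq := hpq.ne
      have hor : p ∈ A ∩ B ∨ q ∈ A ∩ B := by
        rcases hcond with ⟨h1, h2⟩ | ⟨h1, h2⟩ | ⟨h1, h2⟩ <;>
          rcases hpm with rfl | rfl | rfl <;> rcases hqm with rfl | rfl | rfl <;>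
          simp_all
      rcases hor with h | h
      · exact hwX ⟨p, h, q, hpq, hw1⟩
      · exact hwX ⟨q, h, p, hpq.symm, hw2⟩
    · exact absurd hu (Set.disjoint_left.1 (D.et_disj p q x y z) (D.imap_sub p q hu1))

end Closure

theorem components_after_host_separation {V W : Type*} (G : SimpleGraph V)
    (H : SimpleGraph W) (D : ExtStripDecomp G H Set.univ) (A B : Set W)
    (hcov : A ∪ B = Set.univ)
    (hsep : ∀ a ∈ A \ B, ∀ b ∈ B \ A, ¬ H.Adj a b)
    (X : Set V) (hX : X = {u : V | ∃ x ∈ A ∩ B, ∃ y, H.Adj x y ∧ u ∈ D.imap x y}) :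
    ∀ v : V, v ∉ X →
      ({u : V | (removeVerts G X).Reachable u v} ⊆ D.preimg (A \ B)) ∨
      ({u : V | (removeVerts G X).Reachable u v} ⊆ D.preimg (B \ A)) ∨
      (∃ x ∈ A ∩ B, {u : V | (removeVerts G X).Reachable u v} ⊆ D.vmap x) ∨
      (∃ x y, H.Adj x y ∧ x ∈ A ∧ y ∈ A ∧
        {u : V | (removeVerts G X).Reachable u v} ⊆ D.emap x y) ∨
      (∃ x y z, IsTriangle H x y z ∧
        ((x ∈ A ∩ B ∧ y ∈ A ∩ B) ∨ (x ∈ A ∩ B ∧ z ∈ A ∩ B) ∨ (y ∈ A ∩ B ∧ z ∈ A ∩ B)) ∧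
        {u : V | (removeVerts G X).Reachable u v} ⊆ D.tmap x y z) := by
  intro v hv
  have hcov' : B ∪ A = Set.univ := by rw [Set.union_comm]; exact hcov
  have hsep' : ∀ b ∈ B \ A, ∀ a ∈ A \ B, ¬ H.Adj b a :=
    fun b hb a ha h => hsep a ha b hb h.symm
  have hX' : X = {u : V | ∃ x ∈ B ∩ A, ∃ y, H.Adj x y ∧ u ∈ D.imap x y} := by
    rw [hX, Set.inter_comm]
  have reach : ∀ S : Set V, v ∈ S →
      (∀ u w, (removeVerts G X).Adj u w → u ∈ S → w ∈ S) →
      {u : V | (removeVerts G X).Reachable u v} ⊆ S := by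
    intro S hvS hcl u hu
    exact reach_closed hcl v u hu.symm hvS
  have P1 := preimg_diff_closed D A B hcov hsep X hX
  have P2 := preimg_diff_closed D B A hcov' hsep' X hX'
  have side3 : ∀ p : W, p ∉ A ∩ B → p ∈ A \ B ∨ p ∈ B \ A := by
    intro p hp
    have hp' : p ∈ A ∪ B := hcov ▸ Set.mem_univ p
    rcases hp' with h | h
    · exact Or.inl ⟨h, fun hB => hp ⟨h, hB⟩⟩
    · exact Or.inr ⟨h, fun hA => hp ⟨hA, h⟩⟩
  have sideA := side_lemma hcov hsep
  have sideB := side_lemma hcov' hsep'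
  have sideT : ∀ p q : W, p ∉ A ∩ B → q ∉ A ∩ B → H.Adj p q →
      (p ∈ A \ B ∧ q ∈ A \ B) ∨ (p ∈ B \ A ∧ q ∈ B \ A) := by
    intro p q hp hq hpq
    rcases side3 p hp with h | h
    · exact Or.inl ⟨h, sideA q p hq hpq.symm h⟩
    · exact Or.inr ⟨h, sideB q p (by rwa [Set.inter_comm] at hq) hpq.symm h⟩
  rcases D.cover v (Set.mem_univ v) with ⟨x, hvx⟩ | ⟨x, y, hvxy⟩ | ⟨x, y, z, hvxyz⟩
  · -- v in a vertex set
    by_cases hx : x ∈ A ∩ B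
    · exact Or.inr (Or.inr (Or.inl ⟨x, hx, reach _ hvx (vmap_closed D A B X hX x hx)⟩))
    · rcases side3 x hx with h | h
      · exact Or.inl (reach _ (Or.inl ⟨x, h, hvx⟩) P1)
      · exact Or.inr (Or.inl (reach _ (Or.inl ⟨x, h, hvx⟩) P2))
  · -- v in an edge set
    have hxyadj : H.Adj x y := adj_of_mem_emap D hvxy
    by_cases hx : x ∈ A ∩ B
    · by_cases hy : y ∈ A ∩ B
      · exact Or.inr (Or.inr (Or.inr (Or.inl ⟨x, y, hxyadj, hx.1, hy.1,
          reach _ hvxy (emap_closed D A B X hX x y hx hy)⟩)))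
      · rcases side3 y hy with h | h
        · exact Or.inl (reach _ (Or.inr (Or.inl ⟨x, y, hxyadj, Or.inr h, hvxy⟩)) P1)
        · exact Or.inr (Or.inl
            (reach _ (Or.inr (Or.inl ⟨x, y, hxyadj, Or.inr h, hvxy⟩)) P2))
    · rcases side3 x hx with h | h
      · exact Or.inl (reach _ (Or.inr (Or.inl ⟨x, y, hxyadj, Or.inl h, hvxy⟩)) P1)
      · exact Or.inr (Or.inl
          (reach _ (Or.inr (Or.inl ⟨x, y, hxyadj, Or.inl h, hvxy⟩)) P2))
  · -- v in a triangle set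
    have htri := tri_of_mem_tmap D hvxyz
    have opt5 : ∀ hc : (x ∈ A ∩ B ∧ y ∈ A ∩ B) ∨ (x ∈ A ∩ B ∧ z ∈ A ∩ B) ∨
        (y ∈ A ∩ B ∧ z ∈ A ∩ B),
        ∃ x y z, IsTriangle H x y z ∧
          ((x ∈ A ∩ B ∧ y ∈ A ∩ B) ∨ (x ∈ A ∩ B ∧ z ∈ A ∩ B) ∨ (y ∈ A ∩ B ∧ z ∈ A ∩ B)) ∧
          {u : V | (removeVerts G X).Reachable u v} ⊆ D.tmap x y z :=
      fun hc => ⟨x, y, z, htri, hc,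
          reach _ hvxyz (tmap_closed D A B X hX x y z htri hc)⟩
    have optP : ∀ hc : (x ∈ A \ B ∧ y ∈ A \ B) ∨ (x ∈ A \ B ∧ z ∈ A \ B) ∨
        (y ∈ A \ B ∧ z ∈ A \ B),
        {u : V | (removeVerts G X).Reachable u v} ⊆ D.preimg (A \ B) :=
      fun hc => reach _ (Or.inr (Or.inr ⟨x, y, z, htri, hc, hvxyz⟩)) P1
    have optQ : ∀ hc : (x ∈ B \ A ∧ y ∈ B \ A) ∨ (x ∈ B \ A ∧ z ∈ B \ A) ∨
        (y ∈ B \ A ∧ z ∈ B \ A),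
        {u : V | (removeVerts G X).Reachable u v} ⊆ D.preimg (B \ A) :=
      fun hc => reach _ (Or.inr (Or.inr ⟨x, y, z, htri, hc, hvxyz⟩)) P2
    by_cases hx : x ∈ A ∩ B <;> by_cases hy : y ∈ A ∩ B <;> by_cases hz : z ∈ A ∩ B
    · exact Or.inr (Or.inr (Or.inr (Or.inr (opt5 (Or.inl ⟨hx, hy⟩)))))
    · exact Or.inr (Or.inr (Or.inr (Or.inr (opt5 (Or.inl ⟨hx, hy⟩)))))
    · exact Or.inr (Or.inr (Or.inr (Or.inr (opt5 (Or.inr (Or.inl ⟨hx, hz⟩))))))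
    · -- only x
      rcases sideT y z hy hz htri.2.1 with ⟨h1, h2⟩ | ⟨h1, h2⟩
      · exact Or.inl (optP (Or.inr (Or.inr ⟨h1, h2⟩)))
      · exact Or.inr (Or.inl (optQ (Or.inr (Or.inr ⟨h1, h2⟩))))
    · exact Or.inr (Or.inr (Or.inr (Or.inr (opt5 (Or.inr (Or.inr ⟨hy, hz⟩))))))
    · -- only y
      rcases sideT x z hx hz htri.2.2 with ⟨h1, h2⟩ | ⟨h1, h2⟩
      · exact Or.inl (optP (Or.inr (Or.inl ⟨h1, h2⟩)))
      · exact Or.inr (Or.inl (optQ (Or.inr (Or.inl ⟨h1, h2⟩))))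
    · -- only z
      rcases sideT x y hx hy htri.1 with ⟨h1, h2⟩ | ⟨h1, h2⟩
      · exact Or.inl (optP (Or.inl ⟨h1, h2⟩))
      · exact Or.inr (Or.inl (optQ (Or.inl ⟨h1, h2⟩)))
    · -- none
      rcases sideT x y hx hy htri.1 with ⟨h1, h2⟩ | ⟨h1, h2⟩
      · exact Or.inl (optP (Or.inl ⟨h1, h2⟩))
      · exact Or.inr (Or.inl (optQ (Or.inl ⟨h1, h2⟩)))
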